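/- Let T be a 4-dimensional complex vector space, and for X ∈ Λ²T define on the Klein quadric {X : X∧X = 0} the endomorphism-valued expression: if Q is a function on Λ²T homogeneous of degree 2 and F^α_β = 2X^{αγ}∂_{βγ} are the gl(T)-generators, then γ^α_β = (1/(2Q))·F^α_β Q satisfies γ² = γ and tr(γ) = 2 at every point where Q ≠ 0 and X∧X = 0. -/

import Mathlib

open Finset

/-- The value of the `gl(T)`-generator vector field `F^α_β = 2X^{αγ}∂_{βγ}` on the
coordinates of `Λ²T`: `(F^α_β)·dX^{γδ} = δ^γ_β X^{αδ} − δ^δ_β X^{αγ}`. -/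
noncomputable def Fdir (X : Fin 4 → Fin 4 → ℂ) (α β : Fin 4) :
    Fin 4 → Fin 4 → ℂ :=
  fun γ δ => (if γ = β then X α δ else 0) - (if δ = β then X α γ else 0)

/-- `γ^α_β = (1/(2Q))·F^α_β Q`. -/
noncomputable def gammaQ (Q : (Fin 4 → Fin 4 → ℂ) → ℂ)
    (X : Fin 4 → Fin 4 → ℂ) (α β : Fin 4) : ℂ :=
  fderiv ℂ Q X (Fdir X α β) / (2 * Q X)

/-- Expansion of a continuous linear functional in coordinates. -/
theorem clm_expand (L : (Fin 4 → Fin 4 → ℂ) →L[ℂ] ℂ) (Y : Fin 4 → Fin 4 → ℂ) :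
    L Y = ∑ a, ∑ b, Y a b * L (fun i j => if i = a then (if j = b then 1 else 0) else 0) := by
  have hY : Y = ∑ a : Fin 4, ∑ b : Fin 4,
      Y a b • (fun i j => if i = a then (if j = b then (1:ℂ) else 0) else 0) := by
    funext i j
    simp [Finset.sum_apply]
  conv_lhs => rw [hY]
  rw [map_sum]
  refine Finset.sum_congr rfl fun a _ => ?_
  rw [map_sum]
  refine Finset.sum_congr rfl fun b _ => ?_
  rw [map_smul, smul_eq_mul]

/-- The generic simplification of the pairing of a skew covector with `Fdir`. -/
theorem pairing_eq (X c : Fin 4 → Fin 4 → ℂ) (hc : ∀ a b, c b a = -c a b) (i j : Fin 4) :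
    (∑ γ, ∑ δ, ((if γ = j then X i δ else 0) - (if δ = j then X i γ else 0)) * c γ δ)
      = 2 * ∑ δ, X i δ * c j δ := by
  have h1 : ∀ γ : Fin 4, ∑ δ, ((if γ = j then X i δ else 0) - (if δ = j then X i γ else 0)) * c γ δ
      = (if γ = j then ∑ δ, X i δ * c j δ else 0) - X i γ * c γ j := by
    intro γ
    by_cases h : γ = j <;>
      simp [h, sub_mul, ite_mul, zero_mul, mul_sub, mul_ite, mul_zero,
        Finset.sum_sub_distrib, Finset.sum_ite_eq', Finset.sum_ite_eq, mul_comm]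
  rw [Finset.sum_congr rfl fun γ _ => h1 γ]
  rw [Finset.sum_sub_distrib]
  simp only [Finset.sum_ite_eq', Finset.mem_univ, if_true]
  have h2 : ∑ γ, X i γ * c γ j = -∑ γ, X i γ * c j γ := by
    rw [← Finset.sum_neg_distrib]
    refine Finset.sum_congr rfl fun γ _ => ?_
    rw [hc j γ]; ring
  rw [h2]; ring

set_option maxHeartbeats 1000000 in
/-- The key algebraic identity on the Klein quadric. -/
theorem key_identity (X c : Fin 4 → Fin 4 → ℂ)
    (hskew : ∀ a b, X b a = -X a b) (hc : ∀ a b, c b a = -c a b)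
    (hquad : X 0 1 * X 2 3 + X 0 2 * X 3 1 + X 0 3 * X 1 2 = 0)
    (α β : Fin 4) :
    2 * ∑ ρ, (2 * ∑ δ, X α δ * c ρ δ) * (2 * ∑ δ, X ρ δ * c β δ)
      = 2 * (∑ γ, ∑ δ, X γ δ * c γ δ) * (2 * ∑ δ, X α δ * c β δ) := by
  have x00 : X 0 0 = 0 := by linear_combination (hskew 0 0) / 2
  have x11 : X 1 1 = 0 := by linear_combination (hskew 1 1) / 2
  have x22 : X 2 2 = 0 := by linear_combination (hskew 2 2) / 2
  have x33 : X 3 3 = 0 := by linear_combination (hskew 3 3) / 2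
  have x10 : X 1 0 = -X 0 1 := hskew 0 1
  have x20 : X 2 0 = -X 0 2 := hskew 0 2
  have x21 : X 2 1 = -X 1 2 := hskew 1 2
  have x30 : X 3 0 = -X 0 3 := hskew 0 3
  have x31 : X 3 1 = -X 1 3 := hskew 1 3
  have x32 : X 3 2 = -X 2 3 := hskew 2 3
  have c00 : c 0 0 = 0 := by linear_combination (hc 0 0) / 2
  have c11 : c 1 1 = 0 := by linear_combination (hc 1 1) / 2
  have c22 : c 2 2 = 0 := by linear_combination (hc 2 2) / 2
  have c33 : c 3 3 = 0 := by linear_combination (hc 3 3) / 2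
  have c10 : c 1 0 = -c 0 1 := hc 0 1
  have c20 : c 2 0 = -c 0 2 := hc 0 2
  have c21 : c 2 1 = -c 1 2 := hc 1 2
  have c30 : c 3 0 = -c 0 3 := hc 0 3
  have c31 : c 3 1 = -c 1 3 := hc 1 3
  have c32 : c 3 2 = -c 2 3 := hc 2 3
  have m0 : ∀ h : 0 < 4, (⟨0, h⟩ : Fin 4) = 0 := fun _ => rfl
  have m1 : ∀ h : 1 < 4, (⟨1, h⟩ : Fin 4) = 1 := fun _ => rfl
  have m2 : ∀ h : 2 < 4, (⟨2, h⟩ : Fin 4) = 2 := fun _ => rfl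
  have m3 : ∀ h : 3 < 4, (⟨3, h⟩ : Fin 4) = 3 := fun _ => rfl
  fin_cases α <;> fin_cases β <;>
    simp only [Fin.sum_univ_four, Fin.isValue, m0, m1, m2, m3, x00, x11, x22, x33, x10, x20,
      x21, x30, x31, x32, c00, c11, c22, c33, c10, c20, c21, c30, c31, c32] <;>
    first
      | linear_combination (-8 * (c 0 1 * c 2 3 - c 0 2 * c 1 3 + c 0 3 * c 1 2)) * hquad
          + 8 * (c 0 1 * c 2 3 - c 0 2 * c 1 3 + c 0 3 * c 1 2) * X 0 2 * x31
      | linear_combination (0:ℂ) * hquad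

/-- For a holomorphic function `Q` on `Λ²T` (depending only on the skew part),
homogeneous of degree `2`, and a point `X` of the Klein quadric (`X` skew,
`X∧X = 0`) with `Q(X) ≠ 0`, the endomorphism `γ^α_β = (1/(2Q))·F^α_β Q`
is a projection of trace `2`: `γ² = γ` and `tr γ = 2`. -/
theorem stmt6 (Q : (Fin 4 → Fin 4 → ℂ) → ℂ)
    (hQdiff : Differentiable ℂ Q)
    (hQhom : ∀ (t : ℂ) (Y : Fin 4 → Fin 4 → ℂ), Q (t • Y) = t ^ 2 * Q Y)
    (hQskew : ∀ Y : Fin 4 → Fin 4 → ℂ,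
      Q Y = Q (fun a b => (Y a b - Y b a) / 2))
    (X : Fin 4 → Fin 4 → ℂ) (hskew : ∀ a b, X b a = -X a b)
    (hquad : X 0 1 * X 2 3 + X 0 2 * X 3 1 + X 0 3 * X 1 2 = 0)
    (hQX : Q X ≠ 0) :
    (∀ α β, ∑ ρ, gammaQ Q X α ρ * gammaQ Q X ρ β = gammaQ Q X α β) ∧
      ∑ α, gammaQ Q X α α = 2 := by
  set L : (Fin 4 → Fin 4 → ℂ) →L[ℂ] ℂ := fderiv ℂ Q X with hL
  -- Euler's identity
  have hEuler : L X = 2 * Q X := by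
    have h1 : HasDerivAt (fun t : ℂ => t • X) ((1:ℂ) • X) 1 := (hasDerivAt_id (1:ℂ)).smul_const X
    have h2 : HasDerivAt (fun t : ℂ => Q (t • X)) (L ((1:ℂ) • X)) 1 := by
      have := (hQdiff ((1:ℂ) • X)).hasFDerivAt.comp_hasDerivAt 1 h1
      simp only [one_smul] at this ⊢
      exact this
    have h3 : HasDerivAt (fun t : ℂ => Q (t • X)) (2 * Q X) 1 := by
      have h4 : (fun t : ℂ => Q (t • X)) = fun t : ℂ => t ^ 2 * Q X := by
        funext t; exact hQhom t X
      rw [h4]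
      simpa using (hasDerivAt_pow 2 (1:ℂ)).mul_const (Q X)
    have := h2.unique h3
    simpa using this
  -- L only sees the skew part
  have hLS : ∀ Y : Fin 4 → Fin 4 → ℂ,
      L Y = L (fun a b => (Y a b - Y b a) / 2) := by
    intro Y
    set S : Fin 4 → Fin 4 → ℂ := fun a b => (Y a b - Y b a) / 2 with hS
    have key : ∀ Z : Fin 4 → Fin 4 → ℂ,
        HasDerivAt (fun t : ℂ => Q (X + t • Z)) (L Z) 0 := by
      intro Z
      have h1 : HasDerivAt (fun t : ℂ => X + t • Z) Z 0 := by
        simpa using (((hasDerivAt_id (0:ℂ)).smul_const Z).const_add X)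
      have h2 := (hQdiff (X + (0:ℂ) • Z)).hasFDerivAt.comp_hasDerivAt 0 h1
      simp only [zero_smul, add_zero] at h2
      exact h2
    have heq : (fun t : ℂ => Q (X + t • Y)) = (fun t : ℂ => Q (X + t • S)) := by
      funext t
      rw [hQskew (X + t • Y)]
      congr 1
      funext a b
      simp only [Pi.add_apply, Pi.smul_apply, smul_eq_mul, hS]
      rw [hskew a b]
      ring
    have h5 := key Y
    rw [heq] at h5
    exact h5.unique (key S)
  -- coordinates of L
  set c : Fin 4 → Fin 4 → ℂ :=
    fun a b => L (fun i j => if i = a then (if j = b then 1 else 0) else 0) with hcdef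
  have hc : ∀ a b, c b a = -c a b := by
    intro a b
    have h1 := hLS (fun i j => if i = b then (if j = a then (1:ℂ) else 0) else 0)
    have h2 : (fun i j => (((if i = b then (if j = a then (1:ℂ) else 0) else 0)
        - (if j = b then (if i = a then (1:ℂ) else 0) else 0))) / 2)
        = (2⁻¹ : ℂ) • ((fun i j => if i = b then (if j = a then (1:ℂ) else 0) else 0)
          - fun i j => if i = a then (if j = b then (1:ℂ) else 0) else 0) := by
      funext i j
      by_cases hab : a = b <;> by_cases hib : i = b <;> by_cases hja : j = a <;>
        by_cases hia : i = a <;> by_cases hjb : j = b <;>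
        simp [hab, hib, hja, hia, hjb, Pi.smul_apply, Pi.sub_apply] <;>
        first
          | ring
          | (simp_all; done)
          | (exfalso; apply hab; omega)
    rw [h2] at h1
    rw [map_smul, map_sub] at h1
    have : c b a = 2⁻¹ * (c b a - c a b) := by
      simpa [hcdef, smul_eq_mul] using h1
    linear_combination 2 * this
  have expand : ∀ Y : Fin 4 → Fin 4 → ℂ, L Y = ∑ a, ∑ b, Y a b * c a b :=
    fun Y => clm_expand L Y
  -- value of L on the Fdir directions
  have hA : ∀ i j, L (Fdir X i j) = 2 * ∑ δ, X i δ * c j δ := by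
    intro i j
    rw [expand (Fdir X i j)]
    simpa only [Fdir] using pairing_eq X c hc i j
  have h2Q : (2 : ℂ) * Q X ≠ 0 := by
    simp [hQX]
  -- the value of L X in coordinates
  have hLX : (∑ γ, ∑ δ, X γ δ * c γ δ) = 2 * Q X := by
    rw [← expand X, hEuler]
  constructor
  · intro α β
    have key := key_identity X c hskew hc hquad α β
    rw [hLX] at key
    simp only [gammaQ, ← hL, hA]
    rw [Finset.sum_congr rfl fun ρ _ =>
      div_mul_div_comm (2 * ∑ δ, X α δ * c ρ δ) (2 * Q X) (2 * ∑ δ, X ρ δ * c β δ) (2 * Q X)]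
    rw [← Finset.sum_div]
    rw [div_eq_div_iff (by exact mul_ne_zero h2Q h2Q) h2Q]
    linear_combination (Q X) * key
  · -- trace
    have htr : ∀ α, L (Fdir X α α) = 2 * ∑ δ, X α δ * c α δ := fun α => hA α α
    have hsum : ∑ α, gammaQ Q X α α = (∑ α, ∑ δ, X α δ * c α δ) / (Q X) := by
      simp only [gammaQ, ← hL, htr]
      rw [← Finset.sum_div]
      rw [← Finset.mul_sum]
      rw [mul_div_mul_left _ _ (two_ne_zero)]
    rw [hsum, hLX]
    field_simp
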